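/- Subject Expansion: in the strict λ-calculus, if Γ; Ω; Δ ⊢ M : A →ᵏ B for any label k ∈ {1, 0, u}, then the η-expansion satisfies Γ; Ω; Δ ⊢ λxᵏ:A. M xᵏ : A →ᵏ B (for x fresh). -/
import Mathlib


/- A strict λ-calculus with strict (1), irrelevant (0) and unrestricted (u)
   function spaces, in locally nameless representation.  Contexts are finite
   sets of (variable name, type) declarations, split into three zones
   Γ (unrestricted); Ω (irrelevant); Δ (strict). -/

/-- Labels `k ::= 1 | 0 | u`. -/
inductive Lab : Type
  | one
  | zero
  | un
deriving DecidableEq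

/-- Types `A ::= a | A₁ →ᵏ A₂` over atomic types `a` (names in ℕ). -/
inductive Ty : Type
  | atom : ℕ → Ty
  | arr : Ty → Lab → Ty → Ty
deriving DecidableEq

/-- Terms `M ::= c | x | λxᵏ:A.M | M Nᵏ` (locally nameless: bound variables
    are de Bruijn indices, free variables/parameters are names). -/
inductive Tm : Type
  | const : ℕ → Tm
  | bvar : ℕ → Tm
  | fvar : ℕ → Tm
  | lam : Lab → Ty → Tm → Tm
  | app : Tm → Lab → Tm → Tm
deriving DecidableEq

/-- Opening: replace the bound variable `k` by the term `u`. -/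
def Tm.openRec (k : ℕ) (u : Tm) : Tm → Tm
  | .const c => .const c
  | .bvar i => if i = k then u else .bvar i
  | .fvar x => .fvar x
  | .lam l A M => .lam l A (Tm.openRec (k+1) u M)
  | .app M l N => .app (Tm.openRec k u M) l (Tm.openRec k u N)

/-- `M.open0 N` is the body `M` of an abstraction with its bound variable
    replaced by `N`; since free variables are named, this is
    capture-avoiding substitution of the bound variable by construction. -/
def Tm.open0 (M u : Tm) : Tm := Tm.openRec 0 u M

/-- A context zone: a finite set of declarations `x : A`. -/
abbrev Ctx : Type := Finset (ℕ × Ty)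

/-- The variables declared in a context. -/
def Ctx.names (Γ : Ctx) : Finset ℕ := Γ.image Prod.fst

/-- The typing judgment `Γ; Ω; Δ ⊢ M : A` of the strict λ-calculus,
    over a fixed signature `Sg` assigning types to constants
    (a function, so each constant is declared at most once). -/
inductive Typ (Sg : ℕ → Option Ty) : Ctx → Ctx → Ctx → Tm → Ty → Prop
  | con {Γ Ω : Ctx} {c : ℕ} {A : Ty} :
      Sg c = some A → Typ Sg Γ Ω ∅ (.const c) A
  | idu {Γ Ω : Ctx} {x : ℕ} {A : Ty} :
      (x, A) ∈ Γ → Typ Sg Γ Ω ∅ (.fvar x) A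
  | id1 {Γ Ω : Ctx} {x : ℕ} {A : Ty} :
      Typ Sg Γ Ω {(x, A)} (.fvar x) A
  | lamu {Γ Ω Δ : Ctx} {x : ℕ} {A B : Ty} {M : Tm} :
      x ∉ Ctx.names (Γ ∪ Ω ∪ Δ) →
      Typ Sg (insert (x, A) Γ) Ω Δ (Tm.open0 M (.fvar x)) B →
      Typ Sg Γ Ω Δ (.lam .un A M) (.arr A .un B)
  | lam0 {Γ Ω Δ : Ctx} {x : ℕ} {A B : Ty} {M : Tm} :
      x ∉ Ctx.names (Γ ∪ Ω ∪ Δ) →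
      Typ Sg Γ (insert (x, A) Ω) Δ (Tm.open0 M (.fvar x)) B →
      Typ Sg Γ Ω Δ (.lam .zero A M) (.arr A .zero B)
  | lam1 {Γ Ω Δ : Ctx} {x : ℕ} {A B : Ty} {M : Tm} :
      x ∉ Ctx.names (Γ ∪ Ω ∪ Δ) →
      Typ Sg Γ Ω (insert (x, A) Δ) (Tm.open0 M (.fvar x)) B →
      Typ Sg Γ Ω Δ (.lam .one A M) (.arr A .one B)
  | appu {Γ Ω Δ : Ctx} {M N : Tm} {A B : Ty} :
      Typ Sg Γ Ω Δ M (.arr A .un B) →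
      Typ Sg (Γ ∪ Δ) Ω ∅ N A →
      Typ Sg Γ Ω Δ (.app M .un N) B
  | app0 {Γ Ω Δ : Ctx} {M N : Tm} {A B : Ty} :
      Typ Sg Γ Ω Δ M (.arr A .zero B) →
      Typ Sg (Γ ∪ Ω ∪ Δ) ∅ ∅ N A →
      Typ Sg Γ Ω Δ (.app M .zero N) B
  | app1 {Γ Ω ΔM ΔN : Ctx} {M N : Tm} {A B : Ty} :
      Disjoint ΔM ΔN →
      Typ Sg (Γ ∪ ΔN) Ω ΔM M (.arr A .one B) →
      Typ Sg (Γ ∪ ΔM) Ω ΔN N A →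
      Typ Sg Γ Ω (ΔM ∪ ΔN) (.app M .one N) B

/-! ### Auxiliary machinery -/

/-- Free variables of a term. -/
def Tm.fv : Tm → Finset ℕ
  | .const _ => ∅
  | .bvar _ => ∅
  | .fvar x => {x}
  | .lam _ _ M => M.fv
  | .app M _ N => M.fv ∪ N.fv

lemma fv_subset_fv_openRec (M : Tm) : ∀ (k : ℕ) (u : Tm),
    M.fv ⊆ (Tm.openRec k u M).fv := by
  induction M with
  | const c => intro k u; simp [Tm.openRec]
  | bvar i => intro k u; simp [Tm.openRec, Tm.fv]
  | fvar x => intro k u; simp [Tm.openRec]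
  | lam l A M ih => intro k u; simpa [Tm.openRec, Tm.fv] using ih (k+1) u
  | app M l N ihM ihN =>
      intro k u
      simp only [Tm.openRec, Tm.fv]
      exact Finset.union_subset_union (ihM k u) (ihN k u)

lemma fv_openRec_subset (M : Tm) : ∀ (k : ℕ) (u : Tm),
    (Tm.openRec k u M).fv ⊆ M.fv ∪ u.fv := by
  induction M with
  | const c => intro k u; simp [Tm.openRec, Tm.fv]
  | bvar i =>
      intro k u
      by_cases h : i = k <;> simp [Tm.openRec, Tm.fv, h]
  | fvar x => intro k u; simp [Tm.openRec, Tm.fv]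
  | lam l A M ih => intro k u; simpa [Tm.openRec, Tm.fv] using ih (k+1) u
  | app M l N ihM ihN =>
      intro k u
      simp only [Tm.openRec, Tm.fv]
      intro a ha
      rcases Finset.mem_union.1 ha with h | h
      · rcases Finset.mem_union.1 (ihM k u h) with h | h <;> simp [h]
      · rcases Finset.mem_union.1 (ihN k u h) with h | h <;> simp [h]

/-- If a term is unchanged by opening at index `j`, it is unchanged by
    opening at any other index `i`. -/
lemma openRec_of_openRec {i j : ℕ} (hij : i ≠ j) (u v : Tm) :
    ∀ M : Tm, Tm.openRec i u (Tm.openRec j v M) = Tm.openRec j v M →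
      Tm.openRec i u M = M := by
  intro M
  induction M generalizing i j with
  | const c => intro _; rfl
  | bvar n =>
      intro h
      by_cases hn : n = j
      · subst hn
        simp only [Tm.openRec, if_neg (Ne.symm hij).symm]
        simp [Tm.openRec, hij.symm]
      · simpa [Tm.openRec, hn] using h
  | fvar x => intro _; rfl
  | lam l A M ih =>
      intro h
      simp only [Tm.openRec, Tm.lam.injEq] at h ⊢
      exact ⟨trivial, trivial, ih (by omega) h.2.2⟩
  | app M l N ihM ihN =>
      intro h
      simp only [Tm.openRec, Tm.app.injEq] at h ⊢
      exact ⟨ihM hij h.1, trivial, ihN hij h.2.2⟩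

/-- Typable terms are locally closed. -/
lemma typ_lc {Sg : ℕ → Option Ty} {Γ Ω Δ : Ctx} {M : Tm} {A : Ty}
    (h : Typ Sg Γ Ω Δ M A) : ∀ (n : ℕ) (u : Tm), Tm.openRec n u M = M := by
  induction h with
  | con _ => intro n u; rfl
  | idu _ => intro n u; rfl
  | id1 => intro n u; rfl
  | lamu _ _ ih =>
      intro n u
      simp only [Tm.openRec, Tm.lam.injEq]
      exact ⟨trivial, trivial, openRec_of_openRec (by omega) u (.fvar _) _ (ih (n+1) u)⟩
  | lam0 _ _ ih =>
      intro n u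
      simp only [Tm.openRec, Tm.lam.injEq]
      exact ⟨trivial, trivial, openRec_of_openRec (by omega) u (.fvar _) _ (ih (n+1) u)⟩
  | lam1 _ _ ih =>
      intro n u
      simp only [Tm.openRec, Tm.lam.injEq]
      exact ⟨trivial, trivial, openRec_of_openRec (by omega) u (.fvar _) _ (ih (n+1) u)⟩
  | appu _ _ ihM ihN => intro n u; simp [Tm.openRec, ihM n u, ihN n u]
  | app0 _ _ ihM ihN => intro n u; simp [Tm.openRec, ihM n u, ihN n u]
  | app1 _ _ _ ihM ihN => intro n u; simp [Tm.openRec, ihM n u, ihN n u]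

/-! ### Name swapping (equivariance) -/

/-- Swap the names `a` and `b`. -/
def swN (a b z : ℕ) : ℕ := if z = a then b else if z = b then a else z

lemma swN_invol (a b z : ℕ) : swN a b (swN a b z) = z := by
  unfold swN; split_ifs <;> omega

lemma swN_injective (a b : ℕ) : Function.Injective (swN a b) := by
  intro x y h
  have := congrArg (swN a b) h
  rwa [swN_invol, swN_invol] at this

lemma swN_left (a b : ℕ) : swN a b a = b := by simp [swN]

lemma swN_of_ne {a b z : ℕ} (h1 : z ≠ a) (h2 : z ≠ b) : swN a b z = z := by
  simp [swN, h1, h2]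

/-- Swap the names `a` and `b` in a term. -/
def Tm.sw (a b : ℕ) : Tm → Tm
  | .const c => .const c
  | .bvar i => .bvar i
  | .fvar x => .fvar (swN a b x)
  | .lam l A M => .lam l A (Tm.sw a b M)
  | .app M l N => .app (Tm.sw a b M) l (Tm.sw a b N)

lemma Tm.sw_openRec (a b : ℕ) (k : ℕ) (u : Tm) : ∀ M : Tm,
    Tm.sw a b (Tm.openRec k u M) = Tm.openRec k (Tm.sw a b u) (Tm.sw a b M) := by
  intro M
  induction M generalizing k with
  | const c => rfl
  | bvar i => by_cases h : i = k <;> simp [Tm.openRec, Tm.sw, h]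
  | fvar x => rfl
  | lam l A M ih => simp [Tm.openRec, Tm.sw, ih]
  | app M l N ihM ihN => simp [Tm.openRec, Tm.sw, ihM, ihN]

lemma Tm.sw_of_fv {a b : ℕ} {M : Tm} (ha : a ∉ M.fv) (hb : b ∉ M.fv) :
    Tm.sw a b M = M := by
  induction M with
  | const c => rfl
  | bvar i => rfl
  | fvar x =>
      simp [Tm.fv] at ha hb
      simp [Tm.sw, swN_of_ne (Ne.symm ha) (Ne.symm hb)]
  | lam l A M ih => simp [Tm.fv] at ha hb; simp [Tm.sw, ih ha hb]
  | app M l N ihM ihN =>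
      simp [Tm.fv] at ha hb
      simp [Tm.sw, ihM ha.1 hb.1, ihN ha.2 hb.2]

/-- Swap the names `a` and `b` in a context. -/
def Ctx.sw (a b : ℕ) (Γ : Ctx) : Ctx := Γ.image (fun p => (swN a b p.1, p.2))

lemma Ctx.sw_empty (a b : ℕ) : Ctx.sw a b ∅ = ∅ := rfl

lemma Ctx.sw_insert (a b : ℕ) (x : ℕ) (A : Ty) (Γ : Ctx) :
    Ctx.sw a b (insert (x, A) Γ) = insert (swN a b x, A) (Ctx.sw a b Γ) := by
  simp [Ctx.sw, Finset.image_insert]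

lemma Ctx.sw_union (a b : ℕ) (Γ Δ : Ctx) :
    Ctx.sw a b (Γ ∪ Δ) = Ctx.sw a b Γ ∪ Ctx.sw a b Δ := by
  simp [Ctx.sw, Finset.image_union]

lemma Ctx.sw_singleton (a b : ℕ) (x : ℕ) (A : Ty) :
    Ctx.sw a b ({(x, A)} : Ctx) = {(swN a b x, A)} := by
  simp [Ctx.sw]

lemma Ctx.mem_sw {a b x : ℕ} {A : Ty} {Γ : Ctx} (h : (x, A) ∈ Γ) :
    (swN a b x, A) ∈ Ctx.sw a b Γ := by
  exact Finset.mem_image.2 ⟨(x, A), h, rfl⟩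

lemma Ctx.names_sw (a b : ℕ) (Γ : Ctx) :
    Ctx.names (Ctx.sw a b Γ) = (Ctx.names Γ).image (swN a b) := by
  simp [Ctx.names, Ctx.sw, Finset.image_image]
  rfl

lemma Ctx.notMem_names_sw {a b x : ℕ} {Γ : Ctx} (h : x ∉ Ctx.names Γ) :
    swN a b x ∉ Ctx.names (Ctx.sw a b Γ) := by
  rw [Ctx.names_sw]
  intro hx
  rcases Finset.mem_image.1 hx with ⟨y, hy, he⟩
  exact h (swN_injective a b he ▸ hy)

lemma Ctx.sw_disjoint {a b : ℕ} {Γ Δ : Ctx} (h : Disjoint Γ Δ) :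
    Disjoint (Ctx.sw a b Γ) (Ctx.sw a b Δ) := by
  have hinj : Function.Injective (fun p : ℕ × Ty => (swN a b p.1, p.2)) := by
    intro p q hpq
    have h1 := congrArg Prod.fst hpq
    have h2 := congrArg Prod.snd hpq
    simp at h1 h2
    exact Prod.ext (swN_injective a b h1) h2
  exact (Finset.disjoint_image hinj).2 h

lemma Ctx.sw_of_names {a b : ℕ} {Γ : Ctx} (ha : a ∉ Ctx.names Γ)
    (hb : b ∉ Ctx.names Γ) : Ctx.sw a b Γ = Γ := by
  have : ∀ p ∈ Γ, (fun p : ℕ × Ty => (swN a b p.1, p.2)) p = p := by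
    intro p hp
    have hpa : p.1 ≠ a := fun he => ha (Finset.mem_image.2 ⟨p, hp, he⟩)
    have hpb : p.1 ≠ b := fun he => hb (Finset.mem_image.2 ⟨p, hp, he⟩)
    simp [swN_of_ne hpa hpb]
  calc Ctx.sw a b Γ = Γ.image id := Finset.image_congr (fun p hp => this p hp)
  _ = Γ := Finset.image_id

/-- Equivariance: typing is preserved by swapping names. -/
lemma typ_sw {Sg : ℕ → Option Ty} {Γ Ω Δ : Ctx} {M : Tm} {A : Ty} (a b : ℕ)
    (h : Typ Sg Γ Ω Δ M A) :
    Typ Sg (Ctx.sw a b Γ) (Ctx.sw a b Ω) (Ctx.sw a b Δ) (Tm.sw a b M) A := by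
  induction h with
  | con hc => exact .con hc
  | idu hx => exact .idu (Ctx.mem_sw hx)
  | id1 => rw [Ctx.sw_singleton]; exact .id1
  | lamu hx _ ih =>
      apply Typ.lamu (x := swN a b _)
      · rw [← Ctx.sw_union, ← Ctx.sw_union]
        exact Ctx.notMem_names_sw hx
      · rw [← Ctx.sw_insert]
        simpa [Tm.open0, Tm.sw_openRec, Tm.sw] using ih
  | lam0 hx _ ih =>
      apply Typ.lam0 (x := swN a b _)
      · rw [← Ctx.sw_union, ← Ctx.sw_union]
        exact Ctx.notMem_names_sw hx
      · rw [← Ctx.sw_insert]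
        simpa [Tm.open0, Tm.sw_openRec, Tm.sw] using ih
  | lam1 hx _ ih =>
      apply Typ.lam1 (x := swN a b _)
      · rw [← Ctx.sw_union, ← Ctx.sw_union]
        exact Ctx.notMem_names_sw hx
      · rw [← Ctx.sw_insert]
        simpa [Tm.open0, Tm.sw_openRec, Tm.sw] using ih
  | appu _ _ ihM ihN =>
      exact .appu ihM (by rw [← Ctx.sw_union]; simpa [Ctx.sw_empty] using ihN)
  | app0 _ _ ihM ihN =>
      exact .app0 ihM
        (by rw [← Ctx.sw_union, ← Ctx.sw_union]; simpa [Ctx.sw_empty] using ihN)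
  | app1 hd _ _ ihM ihN =>
      rw [Tm.sw, Ctx.sw_union]
      exact .app1 (Ctx.sw_disjoint hd)
        (by rw [← Ctx.sw_union]; exact ihM)
        (by rw [← Ctx.sw_union]; exact ihN)

/-! ### Weakening by a fresh variable -/

lemma swN_right (a b : ℕ) : swN a b b = a := by
  unfold swN; split_ifs <;> omega

lemma swN_cases (a b z : ℕ) : swN a b z = z ∨ swN a b z = a ∨ swN a b z = b := by
  unfold swN; split_ifs <;> simp

lemma swN_ne_left {a b z : ℕ} (h : z ≠ b) : swN a b z ≠ a := fun he =>
  h (swN_injective a b (he.trans (swN_right a b).symm))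

lemma sw_open0 {x w : ℕ} {M : Tm} (hx : x ∉ M.fv) (hw : w ∉ M.fv) (y : ℕ) :
    Tm.sw x w (Tm.open0 M (.fvar y)) = Tm.open0 M (.fvar (swN x w y)) := by
  simp [Tm.open0, Tm.sw_openRec, Tm.sw_of_fv hx hw, Tm.sw]

lemma Ctx.names_union (Γ Δ : Ctx) :
    Ctx.names (Γ ∪ Δ) = Ctx.names Γ ∪ Ctx.names Δ := Finset.image_union ..

lemma Ctx.names_insert (x : ℕ) (A : Ty) (Γ : Ctx) :
    Ctx.names (insert (x, A) Γ) = insert x (Ctx.names Γ) := Finset.image_insert ..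

lemma Ctx.names_empty : Ctx.names (∅ : Ctx) = ∅ := rfl

lemma not_names3 {x : ℕ} {Γ Ω Δ : Ctx} (h : x ∉ Ctx.names (Γ ∪ Ω ∪ Δ)) :
    x ∉ Ctx.names Γ ∧ x ∉ Ctx.names Ω ∧ x ∉ Ctx.names Δ := by
  simp [Ctx.names_union] at h; tauto

/-- Weakening: a fresh variable (not free in the subject) may be added to
    the unrestricted zone `Γ` or to the irrelevant zone `Ω`. -/
lemma typ_wk {Sg : ℕ → Option Ty} {Γ Ω Δ : Ctx} {M : Tm} {A : Ty}
    (h : Typ Sg Γ Ω Δ M A) : ∀ (x : ℕ) (C : Ty),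
    x ∉ Ctx.names (Γ ∪ Ω ∪ Δ) → x ∉ M.fv →
    Typ Sg (insert (x, C) Γ) Ω Δ M A ∧ Typ Sg Γ (insert (x, C) Ω) Δ M A := by
  induction h with
  | con hc => exact fun x C _ _ => ⟨.con hc, .con hc⟩
  | idu hx => exact fun x C _ _ => ⟨.idu (Finset.mem_insert_of_mem hx), .idu hx⟩
  | id1 => exact fun x C _ _ => ⟨.id1, .id1⟩
  | @lamu Γ Ω Δ y A B M hy prem ih =>
      intro x C hx hfv
      have hxM : x ∉ M.fv := by simpa [Tm.fv] using hfv
      obtain ⟨hxΓ, hxΩ, hxΔ⟩ := not_names3 hx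
      obtain ⟨hyΓ, hyΩ, hyΔ⟩ := not_names3 hy
      obtain ⟨w, hw⟩ := Infinite.exists_notMem_finset
        (Ctx.names (Γ ∪ Ω ∪ Δ) ∪ (Tm.open0 M (.fvar y)).fv ∪ {x, y})
      have hwn : w ∉ Ctx.names (Γ ∪ Ω ∪ Δ) := fun h =>
        hw (Finset.mem_union_left _ (Finset.mem_union_left _ h))
      have hwM0 : w ∉ (Tm.open0 M (.fvar y)).fv := fun h =>
        hw (Finset.mem_union_left _ (Finset.mem_union_right _ h))
      have hwx : w ≠ x := fun h => hw (by simp [h])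
      have hwy : w ≠ y := fun h => hw (by simp [h])
      have hwM : w ∉ M.fv := fun h => hwM0 (fv_subset_fv_openRec M 0 _ h)
      obtain ⟨hwΓ, hwΩ, hwΔ⟩ := not_names3 hwn
      have hfr : w ∉ Ctx.names (insert (y, A) Γ ∪ Ω ∪ Δ) := by
        simp [Ctx.names_union, Ctx.names_insert]; tauto
      have hy'x : swN x w y ≠ x := swN_ne_left (Ne.symm hwy)
      have hy'n : swN x w y ∉ Ctx.names (Γ ∪ Ω ∪ Δ) := by
        rcases swN_cases x w y with h | h | h <;> rw [h]
        exacts [hy, hx, hwn]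
      obtain ⟨hy'Γ, hy'Ω, hy'Δ⟩ := not_names3 hy'n
      constructor
      · have d2 := typ_sw x w (ih w C hfr hwM0).1
        rw [Ctx.sw_insert, Ctx.sw_insert, Ctx.sw_of_names hxΓ hwΓ,
          Ctx.sw_of_names hxΩ hwΩ, Ctx.sw_of_names hxΔ hwΔ, swN_right,
          sw_open0 hxM hwM, Finset.insert_comm] at d2
        refine Typ.lamu (x := swN x w y) ?_ d2
        simp [Ctx.names_union, Ctx.names_insert]
        tauto
      · have d2 := typ_sw x w (ih w C hfr hwM0).2
        rw [Ctx.sw_insert, Ctx.sw_insert, Ctx.sw_of_names hxΓ hwΓ,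
          Ctx.sw_of_names hxΩ hwΩ, Ctx.sw_of_names hxΔ hwΔ, swN_right,
          sw_open0 hxM hwM] at d2
        refine Typ.lamu (x := swN x w y) ?_ d2
        simp [Ctx.names_union, Ctx.names_insert]
        tauto
  | @lam0 Γ Ω Δ y A B M hy prem ih =>
      intro x C hx hfv
      have hxM : x ∉ M.fv := by simpa [Tm.fv] using hfv
      obtain ⟨hxΓ, hxΩ, hxΔ⟩ := not_names3 hx
      obtain ⟨hyΓ, hyΩ, hyΔ⟩ := not_names3 hy
      obtain ⟨w, hw⟩ := Infinite.exists_notMem_finset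
        (Ctx.names (Γ ∪ Ω ∪ Δ) ∪ (Tm.open0 M (.fvar y)).fv ∪ {x, y})
      have hwn : w ∉ Ctx.names (Γ ∪ Ω ∪ Δ) := fun h =>
        hw (Finset.mem_union_left _ (Finset.mem_union_left _ h))
      have hwM0 : w ∉ (Tm.open0 M (.fvar y)).fv := fun h =>
        hw (Finset.mem_union_left _ (Finset.mem_union_right _ h))
      have hwx : w ≠ x := fun h => hw (by simp [h])
      have hwy : w ≠ y := fun h => hw (by simp [h])
      have hwM : w ∉ M.fv := fun h => hwM0 (fv_subset_fv_openRec M 0 _ h)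
      obtain ⟨hwΓ, hwΩ, hwΔ⟩ := not_names3 hwn
      have hfr : w ∉ Ctx.names (Γ ∪ insert (y, A) Ω ∪ Δ) := by
        simp [Ctx.names_union, Ctx.names_insert]; tauto
      have hy'x : swN x w y ≠ x := swN_ne_left (Ne.symm hwy)
      have hy'n : swN x w y ∉ Ctx.names (Γ ∪ Ω ∪ Δ) := by
        rcases swN_cases x w y with h | h | h <;> rw [h]
        exacts [hy, hx, hwn]
      obtain ⟨hy'Γ, hy'Ω, hy'Δ⟩ := not_names3 hy'n
      constructor
      · have d2 := typ_sw x w (ih w C hfr hwM0).1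
        rw [Ctx.sw_insert, Ctx.sw_insert, Ctx.sw_of_names hxΓ hwΓ,
          Ctx.sw_of_names hxΩ hwΩ, Ctx.sw_of_names hxΔ hwΔ, swN_right,
          sw_open0 hxM hwM] at d2
        refine Typ.lam0 (x := swN x w y) ?_ d2
        simp [Ctx.names_union, Ctx.names_insert]
        tauto
      · have d2 := typ_sw x w (ih w C hfr hwM0).2
        rw [Ctx.sw_insert, Ctx.sw_insert, Ctx.sw_of_names hxΓ hwΓ,
          Ctx.sw_of_names hxΩ hwΩ, Ctx.sw_of_names hxΔ hwΔ, swN_right,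
          sw_open0 hxM hwM, Finset.insert_comm] at d2
        refine Typ.lam0 (x := swN x w y) ?_ d2
        simp [Ctx.names_union, Ctx.names_insert]
        tauto
  | @lam1 Γ Ω Δ y A B M hy prem ih =>
      intro x C hx hfv
      have hxM : x ∉ M.fv := by simpa [Tm.fv] using hfv
      obtain ⟨hxΓ, hxΩ, hxΔ⟩ := not_names3 hx
      obtain ⟨hyΓ, hyΩ, hyΔ⟩ := not_names3 hy
      obtain ⟨w, hw⟩ := Infinite.exists_notMem_finset
        (Ctx.names (Γ ∪ Ω ∪ Δ) ∪ (Tm.open0 M (.fvar y)).fv ∪ {x, y})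
      have hwn : w ∉ Ctx.names (Γ ∪ Ω ∪ Δ) := fun h =>
        hw (Finset.mem_union_left _ (Finset.mem_union_left _ h))
      have hwM0 : w ∉ (Tm.open0 M (.fvar y)).fv := fun h =>
        hw (Finset.mem_union_left _ (Finset.mem_union_right _ h))
      have hwx : w ≠ x := fun h => hw (by simp [h])
      have hwy : w ≠ y := fun h => hw (by simp [h])
      have hwM : w ∉ M.fv := fun h => hwM0 (fv_subset_fv_openRec M 0 _ h)
      obtain ⟨hwΓ, hwΩ, hwΔ⟩ := not_names3 hwn
      have hfr : w ∉ Ctx.names (Γ ∪ Ω ∪ insert (y, A) Δ) := by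
        simp [Ctx.names_union, Ctx.names_insert]; tauto
      have hy'x : swN x w y ≠ x := swN_ne_left (Ne.symm hwy)
      have hy'n : swN x w y ∉ Ctx.names (Γ ∪ Ω ∪ Δ) := by
        rcases swN_cases x w y with h | h | h <;> rw [h]
        exacts [hy, hx, hwn]
      obtain ⟨hy'Γ, hy'Ω, hy'Δ⟩ := not_names3 hy'n
      constructor
      · have d2 := typ_sw x w (ih w C hfr hwM0).1
        rw [Ctx.sw_insert, Ctx.sw_insert, Ctx.sw_of_names hxΓ hwΓ,
          Ctx.sw_of_names hxΩ hwΩ, Ctx.sw_of_names hxΔ hwΔ, swN_right,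
          sw_open0 hxM hwM] at d2
        refine Typ.lam1 (x := swN x w y) ?_ d2
        simp [Ctx.names_union, Ctx.names_insert]
        tauto
      · have d2 := typ_sw x w (ih w C hfr hwM0).2
        rw [Ctx.sw_insert, Ctx.sw_insert, Ctx.sw_of_names hxΓ hwΓ,
          Ctx.sw_of_names hxΩ hwΩ, Ctx.sw_of_names hxΔ hwΔ, swN_right,
          sw_open0 hxM hwM] at d2
        refine Typ.lam1 (x := swN x w y) ?_ d2
        simp [Ctx.names_union, Ctx.names_insert]
        tauto
  | @appu Γ Ω Δ M N A B hM hN ihM ihN =>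
      intro x C hx hfv
      have hxM : x ∉ M.fv := by simp [Tm.fv] at hfv; tauto
      have hxN : x ∉ N.fv := by simp [Tm.fv] at hfv; tauto
      obtain ⟨hxΓ, hxΩ, hxΔ⟩ := not_names3 hx
      have hxN' : x ∉ Ctx.names ((Γ ∪ Δ) ∪ Ω ∪ (∅ : Ctx)) := by
        simp [Ctx.names_union, Ctx.names_empty]; tauto
      constructor
      · refine Typ.appu (ihM x C hx hxM).1 ?_
        have := (ihN x C hxN' hxN).1
        rwa [← Finset.insert_union] at this
      · exact Typ.appu (ihM x C hx hxM).2 (ihN x C hxN' hxN).2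
  | @app0 Γ Ω Δ M N A B hM hN ihM ihN =>
      intro x C hx hfv
      have hxM : x ∉ M.fv := by simp [Tm.fv] at hfv; tauto
      have hxN : x ∉ N.fv := by simp [Tm.fv] at hfv; tauto
      have hxN' : x ∉ Ctx.names ((Γ ∪ Ω ∪ Δ) ∪ (∅ : Ctx) ∪ (∅ : Ctx)) := by
        simp [Ctx.names_union, Ctx.names_empty] at hx ⊢; tauto
      constructor
      · refine Typ.app0 (ihM x C hx hxM).1 ?_
        have := (ihN x C hxN' hxN).1
        rwa [← Finset.insert_union, ← Finset.insert_union] at this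
      · refine Typ.app0 (ihM x C hx hxM).2 ?_
        have := (ihN x C hxN' hxN).1
        rwa [← Finset.insert_union, ← Finset.union_insert] at this
  | @app1 Γ Ω ΔM ΔN M N A B hd hM hN ihM ihN =>
      intro x C hx hfv
      have hxM : x ∉ M.fv := by simp [Tm.fv] at hfv; tauto
      have hxN : x ∉ N.fv := by simp [Tm.fv] at hfv; tauto
      have hxM' : x ∉ Ctx.names ((Γ ∪ ΔN) ∪ Ω ∪ ΔM) := by
        simp [Ctx.names_union] at hx ⊢; tauto
      have hxN' : x ∉ Ctx.names ((Γ ∪ ΔM) ∪ Ω ∪ ΔN) := by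
        simp [Ctx.names_union] at hx ⊢; tauto
      constructor
      · refine Typ.app1 (A := A) hd ?_ ?_
        · have := (ihM x C hxM' hxM).1
          rwa [← Finset.insert_union] at this
        · have := (ihN x C hxN' hxN).1
          rwa [← Finset.insert_union] at this
      · exact Typ.app1 hd (ihM x C hxM' hxM).2 (ihN x C hxN' hxN).2

/-- **Subject Expansion.**  If `Γ; Ω; Δ ⊢ M : A →ᵏ B` for any label
    `k ∈ {1,0,u}`, then the η-expansion satisfies
    `Γ; Ω; Δ ⊢ λxᵏ:A. M xᵏ : A →ᵏ B` (locally nameless: the bound variable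
    is the index `0`, hence automatically fresh). -/
theorem subject_expansion (Sg : ℕ → Option Ty) (Γ Ω Δ : Ctx) (M : Tm)
    (A B : Ty) (k : Lab)
    (h : Typ Sg Γ Ω Δ M (.arr A k B)) :
    Typ Sg Γ Ω Δ (.lam k A (.app M k (.bvar 0))) (.arr A k B) := by
  obtain ⟨x, hx⟩ := Infinite.exists_notMem_finset (Ctx.names (Γ ∪ Ω ∪ Δ) ∪ M.fv)
  have hxn : x ∉ Ctx.names (Γ ∪ Ω ∪ Δ) := fun hh => hx (Finset.mem_union_left _ hh)
  have hxM : x ∉ M.fv := fun hh => hx (Finset.mem_union_right _ hh)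
  have lc : Tm.openRec 0 (.fvar x) M = M := typ_lc h 0 _
  have hopen : Tm.open0 (Tm.app M k (.bvar 0)) (.fvar x) = .app M k (.fvar x) := by
    simp [Tm.open0, Tm.openRec, lc]
  obtain ⟨hxΓ, hxΩ, hxΔ⟩ := not_names3 hxn
  cases k with
  | un =>
      refine Typ.lamu (x := x) hxn ?_
      rw [hopen]
      exact Typ.appu (typ_wk h x A hxn hxM).1
        (Typ.idu (Finset.mem_union_left _ (Finset.mem_insert_self _ _)))
  | zero =>
      refine Typ.lam0 (x := x) hxn ?_
      rw [hopen]
      exact Typ.app0 (typ_wk h x A hxn hxM).2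
        (Typ.idu (Finset.mem_union_left _
          (Finset.mem_union_right _ (Finset.mem_insert_self _ _))))
  | one =>
      refine Typ.lam1 (x := x) hxn ?_
      rw [hopen]
      have hM' : Typ Sg (Γ ∪ {(x, A)}) Ω Δ M (.arr A .one B) := by
        have := (typ_wk h x A hxn hxM).1
        rwa [Finset.union_comm, ← Finset.insert_eq]
      have hd : Disjoint Δ ({(x, A)} : Ctx) := by
        rw [Finset.disjoint_singleton_right]
        exact fun hmem => hxΔ (Finset.mem_image.2 ⟨_, hmem, rfl⟩)
      have := Typ.app1 hd hM' Typ.id1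
      rwa [Finset.union_comm, ← Finset.insert_eq] at this
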